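/- Let G be a finite acyclic directed graph with edge set E and distinguished distinct vertices s and t, let c : E → ℝ be edge costs, and let (S_1, b_1), …, (S_N, b_N) be finitely many predicate constraints with S_i ⊆ E and b_i ∈ {0,1} such that every directed s–t path of G contains at most one edge from each S_i. Let F be the set of unit s–t flows r : E → ℝ satisfying Σ_{e ∈ S_i} r e = b_i for every i. If F is nonempty, then the linear cost Σ_{e ∈ E} c e · r e attains its minimum over F at some flow r* all of whose values lie in {0,1}; in other words, the linear programming relaxation of the dynamic network flow formulation with fixed binary predicate values is tight. -/

import Mathlib

set_option linter.unusedSectionVars false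
set_option maxHeartbeats 1000000


open Finset

/-- `IsTrail tail head u v l`: the list of edges `l` forms a directed walk
from vertex `u` to vertex `v` (consecutive edges chained head-to-tail). -/
def IsTrail {E V : Type*} (tail head : E → V) : V → V → List E → Prop
  | u, v, [] => u = v
  | u, v, e :: l => tail e = u ∧ IsTrail tail head (head e) v l

/-- A directed graph (given by tail/head maps) is acyclic if it has no
nonempty directed closed walk. -/
def GraphAcyclic {E V : Type*} (tail head : E → V) : Prop :=
  ¬ ∃ (v : V) (l : List E), l ≠ [] ∧ IsTrail tail head v v l

/-- A unit `s`–`t` flow: edge values in `[0,1]`, flow conservation at every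
vertex other than `s` and `t`, net outflow `1` at `s`, net inflow `1` at `t`. -/
def IsUnitFlow {E V : Type*} [Fintype E] [DecidableEq V]
    (tail head : E → V) (s t : V) (r : E → ℝ) : Prop :=
  (∀ e, 0 ≤ r e ∧ r e ≤ 1) ∧
  (∀ v : V, v ≠ s → v ≠ t →
    ∑ e ∈ univ.filter (fun e => head e = v), r e
      = ∑ e ∈ univ.filter (fun e => tail e = v), r e) ∧
  (∑ e ∈ univ.filter (fun e => tail e = s), r e
      - ∑ e ∈ univ.filter (fun e => head e = s), r e = 1) ∧
  (∑ e ∈ univ.filter (fun e => head e = t), r e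
      - ∑ e ∈ univ.filter (fun e => tail e = t), r e = 1)

namespace DNFAux

variable {E V : Type*} [Fintype E] [DecidableEq E] [Fintype V] [DecidableEq V]
variable {tail head : E → V}

lemma trail_append {u v : V} {l₁ l₂ : List E} :
    IsTrail tail head u v (l₁ ++ l₂) ↔
      ∃ w, IsTrail tail head u w l₁ ∧ IsTrail tail head w v l₂ := by
  induction l₁ generalizing u with
  | nil =>
      constructor
      · intro h; exact ⟨u, rfl, h⟩
      · rintro ⟨w, hw, h⟩; cases hw; exact h
  | cons e l ih =>
      constructor
      · rintro ⟨he, h⟩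
        obtain ⟨w, h1, h2⟩ := ih.mp h
        exact ⟨w, ⟨he, h1⟩, h2⟩
      · rintro ⟨w, ⟨he, h1⟩, h2⟩
        exact ⟨he, ih.mpr ⟨w, h1, h2⟩⟩

lemma dup_closed {x : E} {l : List E} (hd : l.Duplicate x) :
    ∀ {u v : V}, IsTrail tail head u v l →
      ∃ m : List E, m ≠ [] ∧ ∃ w, IsTrail tail head w w m := by
  induction hd with
  | cons_mem hmem =>
      intro u v h
      obtain ⟨he, h2⟩ := h
      obtain ⟨a, b, rfl⟩ := List.append_of_mem hmem
      obtain ⟨w, ha, hb⟩ := trail_append.mp h2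
      obtain ⟨hw, -⟩ := hb
      exact ⟨x :: a, by simp, tail x, ⟨rfl, hw ▸ ha⟩⟩
  | cons_duplicate _ ih =>
      intro u v h
      exact ih h.2

lemma trail_nodup (hacyc : GraphAcyclic tail head) {u v : V} {l : List E}
    (h : IsTrail tail head u v l) : l.Nodup := by
  by_contra hnd
  obtain ⟨x, hx⟩ := List.exists_duplicate_iff_not_nodup.mpr hnd
  obtain ⟨m, hm, w, hw⟩ := dup_closed hx h
  exact hacyc ⟨w, m, hm, hw⟩

/-- successor relation: `Step w v` iff there is an edge from `v` to `w`. -/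
def Step (tail head : E → V) (w v : V) : Prop := ∃ e, tail e = v ∧ head e = w

lemma transGen_trail {w v : V} (h : Relation.TransGen (Step tail head) w v) :
    ∃ l : List E, l ≠ [] ∧ IsTrail tail head v w l := by
  induction h with
  | single h =>
      obtain ⟨e, h1, h2⟩ := h
      exact ⟨[e], by simp, h1, h2⟩
  | tail _ h ih =>
      obtain ⟨e, h1, h2⟩ := h
      obtain ⟨l, hl, htr⟩ := ih
      exact ⟨e :: l, by simp, h1, h2 ▸ htr⟩

lemma step_wf (hacyc : GraphAcyclic tail head) : WellFounded (Step tail head) := by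
  haveI : IsTrans V (Relation.TransGen (Step tail head)) :=
    ⟨fun _ _ _ h1 h2 => h1.trans h2⟩
  haveI : IsIrrefl V (Relation.TransGen (Step tail head)) := by
    constructor
    intro v hv
    obtain ⟨l, hl, htr⟩ := transGen_trail hv
    exact hacyc ⟨v, l, hl, htr⟩
  exact Subrelation.wf (fun h => Relation.TransGen.single h)
    (Finite.wellFounded_of_trans_of_irrefl _)


/-- Net in/out count of a trail at each vertex. -/
lemma trail_count {u v : V} {l : List E} (h : IsTrail tail head u v l) (w : V) :
    ∑ e ∈ univ.filter (fun e => head e = w), (l.count e : ℝ)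
      - ∑ e ∈ univ.filter (fun e => tail e = w), (l.count e : ℝ)
    = (if v = w then 1 else 0) - (if u = w then 1 else 0) := by
  induction l generalizing u with
  | nil => cases h; simp
  | cons e l ih =>
      obtain ⟨he, h2⟩ := h
      have key : ∀ s : Finset E,
          ∑ e' ∈ s, (((e :: l).count e' : ℕ) : ℝ)
            = (∑ e' ∈ s, ((l.count e' : ℕ) : ℝ)) + (if e ∈ s then 1 else 0) := by
        intro s
        rw [← Finset.sum_ite_eq' s e (fun _ => (1:ℝ)), ← Finset.sum_add_distrib]
        refine Finset.sum_congr rfl fun x hx => ?_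
        by_cases hxe : x = e <;> simp [List.count_cons, hxe, @eq_comm _ e x]
      rw [key, key]
      have hih := ih h2
      subst he
      simp only [Finset.mem_filter, Finset.mem_univ, true_and]
      split_ifs at hih ⊢ <;> linarith

lemma exists_pos_trail (hacyc : GraphAcyclic tail head) {t : V} {r : E → ℝ}
    (hr : ∀ e, 0 ≤ r e)
    (hout : ∀ w, w ≠ t →
      (0 < ∑ e ∈ univ.filter (fun e => head e = w), r e) →
      0 < ∑ e ∈ univ.filter (fun e => tail e = w), r e) :
    ∀ v, (∃ e, tail e = v ∧ 0 < r e) →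
      ∃ l : List E, l ≠ [] ∧ IsTrail tail head v t l ∧ ∀ e ∈ l, 0 < r e := by
  intro v
  induction v using (step_wf hacyc).induction with
  | _ x ih =>
    rintro ⟨e, hte, hre⟩
    by_cases hht : head e = t
    · exact ⟨[e], by simp, ⟨hte, hht⟩, by simpa⟩
    · have hin : 0 < ∑ e' ∈ univ.filter (fun e' => head e' = head e), r e' := by
        refine Finset.sum_pos' (fun i _ => hr i) ⟨e, ?_, hre⟩
        simp
      have hpos := hout (head e) hht hin
      have : ∃ e', tail e' = head e ∧ 0 < r e' := by
        by_contra hc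
        push_neg at hc
        have : ∑ e' ∈ univ.filter (fun e' => tail e' = head e), r e' ≤ 0 := by
          refine Finset.sum_nonpos fun i hi => ?_
          simp only [Finset.mem_filter] at hi
          exact hc i hi.2
        linarith
      obtain ⟨l, hl, htr, hp⟩ := ih (head e) ⟨e, hte, rfl⟩ this
      exact ⟨e :: l, by simp, ⟨hte, htr⟩, by
        intro e' he'
        rcases List.mem_cons.mp he' with rfl | h
        · exact hre
        · exact hp _ h⟩

lemma circulation_zero (hacyc : GraphAcyclic tail head) {r : E → ℝ}
    (hr : ∀ e, 0 ≤ r e)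
    (hcons : ∀ v, ∑ e ∈ univ.filter (fun e => head e = v), r e
      = ∑ e ∈ univ.filter (fun e => tail e = v), r e) :
    ∀ e, r e = 0 := by
  have key : ∀ v, ¬ ∃ e, tail e = v ∧ 0 < r e := by
    intro v
    induction v using (step_wf hacyc).induction with
    | _ x ih =>
      rintro ⟨e, hte, hre⟩
      have hin : 0 < ∑ e' ∈ univ.filter (fun e' => head e' = head e), r e' := by
        refine Finset.sum_pos' (fun i _ => hr i) ⟨e, ?_, hre⟩
        simp
      rw [hcons (head e)] at hin
      have : ∃ e', tail e' = head e ∧ 0 < r e' := by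
        by_contra hc
        push_neg at hc
        have : ∑ e' ∈ univ.filter (fun e' => tail e' = head e), r e' ≤ 0 := by
          refine Finset.sum_nonpos fun i hi => ?_
          simp only [Finset.mem_filter] at hi
          exact hc i hi.2
        linarith
      exact ih (head e) ⟨e, hte, rfl⟩ this
  intro e
  rcases lt_or_eq_of_le (hr e) with h | h
  · exact absurd ⟨e, rfl, h⟩ (key (tail e))
  · exact h.symm


lemma sum_pos_exists {p : E → Prop} [DecidablePred p] {r : E → ℝ}
    (hr : ∀ e, 0 ≤ r e)
    (h : 0 < ∑ e ∈ univ.filter p, r e) : ∃ e, p e ∧ 0 < r e := by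
  by_contra hc
  push_neg at hc
  have : ∑ e ∈ univ.filter p, r e ≤ 0 := by
    refine Finset.sum_nonpos fun i hi => ?_
    simp only [Finset.mem_filter, Finset.mem_univ, true_and] at hi
    exact hc i hi
  linarith

lemma decompose (hacyc : GraphAcyclic tail head) (s t : V) (hst : s ≠ t) :
    ∀ n : ℕ, ∀ r : E → ℝ, ∀ F : ℝ,
    (univ.filter (fun e => r e ≠ 0)).card ≤ n →
    (∀ e, 0 ≤ r e) →
    (∀ v, v ≠ s → v ≠ t →
      ∑ e ∈ univ.filter (fun e => head e = v), r e
        = ∑ e ∈ univ.filter (fun e => tail e = v), r e) →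
    (∑ e ∈ univ.filter (fun e => tail e = s), r e
        - ∑ e ∈ univ.filter (fun e => head e = s), r e = F) →
    (∑ e ∈ univ.filter (fun e => head e = t), r e
        - ∑ e ∈ univ.filter (fun e => tail e = t), r e = F) →
    0 ≤ F →
    ∃ L : List (ℝ × List E),
      (∀ p ∈ L, 0 < p.1 ∧ p.2 ≠ [] ∧ IsTrail tail head s t p.2 ∧ p.2.Nodup) ∧
      (L.map Prod.fst).sum = F ∧
      (∀ e, r e = (L.map (fun p => p.1 * (p.2.count e : ℝ))).sum) := by
  intro n
  induction n with
  | zero =>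
      intro r F hcard hr hcons hs ht hF
      have hz : ∀ e, r e = 0 := by
        intro e
        by_contra he
        have : e ∈ univ.filter (fun e => r e ≠ 0) := by simp [he]
        have := Finset.card_pos.mpr ⟨e, this⟩
        omega
      refine ⟨[], by simp, ?_, by simp [hz]⟩
      simp only [List.map_nil, List.sum_nil]
      rw [← hs]
      simp [hz]
  | succ n ih =>
      intro r F hcard hr hcons hs ht hF
      by_cases hz : ∀ e, r e = 0
      · refine ⟨[], by simp, ?_, by simp [hz]⟩
        simp only [List.map_nil, List.sum_nil]
        rw [← hs]
        simp [hz]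
      · push_neg at hz
        obtain ⟨e0, he0⟩ := hz
        have hFpos : 0 < F := by
          rcases lt_or_eq_of_le hF with h | h
          · exact h
          · exfalso
            apply he0
            refine circulation_zero hacyc hr ?_ e0
            intro v
            by_cases hvs : v = s
            · subst hvs; linarith
            · by_cases hvt : v = t
              · subst hvt; linarith
              · exact hcons v hvs hvt
        -- there is a positive edge out of s
        have hins : 0 ≤ ∑ e ∈ univ.filter (fun e => head e = s), r e :=
          Finset.sum_nonneg fun i _ => hr i
        have houts : 0 < ∑ e ∈ univ.filter (fun e => tail e = s), r e := by linarith
        obtain ⟨e1, he1, hre1⟩ := sum_pos_exists hr houts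
        -- positive trail from s to t
        have hout : ∀ w, w ≠ t →
            (0 < ∑ e ∈ univ.filter (fun e => head e = w), r e) →
            0 < ∑ e ∈ univ.filter (fun e => tail e = w), r e := by
          intro w hwt hin
          by_cases hws : w = s
          · subst hws; linarith
          · rw [← hcons w hws hwt]; exact hin
        obtain ⟨l, hlne, htr, hlpos⟩ :=
          exists_pos_trail hacyc hr hout s ⟨e1, he1, hre1⟩
        have hnd : l.Nodup := trail_nodup hacyc htr
        have hcnt : ∀ e, (l.count e : ℝ) = if e ∈ l then 1 else 0 := by
          intro e
          by_cases he : e ∈ l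
          · simp [List.count_eq_one_of_mem hnd he, he]
          · simp [List.count_eq_zero_of_not_mem he, he]
        obtain ⟨ea, hea⟩ := List.exists_mem_of_ne_nil l hlne
        obtain ⟨em, hem, hmin⟩ := Finset.exists_min_image l.toFinset r
          ⟨ea, List.mem_toFinset.mpr hea⟩
        rw [List.mem_toFinset] at hem
        set m := r em with hm
        have hmpos : 0 < m := hlpos em hem
        have hmle : ∀ e ∈ l, m ≤ r e := fun e he => hmin e (List.mem_toFinset.mpr he)
        -- net of count at each vertex
        have hnet := trail_count htr
        by_cases hFm : F ≤ m
        · -- r = F • χ_l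
          set r' := fun e => r e - F * (l.count e : ℝ) with hr'def
          have hr' : ∀ e, 0 ≤ r' e := by
            intro e
            simp only [hr'def, hcnt e]
            by_cases he : e ∈ l
            · have := hmle e he; simp [he]; linarith
            · simp [he, hr e]
          have hsums : ∀ p : E → Prop, ∀ _ : DecidablePred p,
              ∑ e ∈ univ.filter p, r' e
                = ∑ e ∈ univ.filter p, r e
                  - F * ∑ e ∈ univ.filter p, (l.count e : ℝ) := by
            intro p hp
            simp [hr'def, Finset.sum_sub_distrib, Finset.mul_sum]
          have hzero : ∀ e, r' e = 0 := by
            refine circulation_zero hacyc hr' ?_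
            intro v
            rw [hsums _ _, hsums _ _]
            have h1 := hnet v
            by_cases hvs : v = s
            · subst hvs
              rw [if_neg (Ne.symm hst), if_pos rfl] at h1
              linear_combination (-1 : ℝ) * hs - F * h1
            · by_cases hvt : v = t
              · subst hvt
                rw [if_pos rfl, if_neg hst] at h1
                linear_combination ht - F * h1
              · have h2 := hcons v hvs hvt
                rw [if_neg (Ne.symm hvt), if_neg (Ne.symm hvs)] at h1
                linear_combination h2 - F * h1
          refine ⟨[(F, l)], ?_, by simp, ?_⟩
          · intro p hp
            simp only [List.mem_singleton] at hp
            subst hp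
            exact ⟨hFpos, hlne, htr, hnd⟩
          · intro e
            have := hzero e
            simp only [hr'def] at this
            simp only [List.map_cons, List.map_nil, List.sum_cons, List.sum_nil, add_zero]
            linarith
        · -- subtract m • χ_l and recurse
          push_neg at hFm
          set r' := fun e => r e - m * (l.count e : ℝ) with hr'def
          have hr' : ∀ e, 0 ≤ r' e := by
            intro e
            simp only [hr'def, hcnt e]
            by_cases he : e ∈ l
            · have := hmle e he; simp [he]; linarith
            · simp [he, hr e]
          have hsums : ∀ p : E → Prop, ∀ _ : DecidablePred p,
              ∑ e ∈ univ.filter p, r' e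
                = ∑ e ∈ univ.filter p, r e
                  - m * ∑ e ∈ univ.filter p, (l.count e : ℝ) := by
            intro p hp
            simp [hr'def, Finset.sum_sub_distrib, Finset.mul_sum]
          have hsub : univ.filter (fun e => r' e ≠ 0) ⊂ univ.filter (fun e => r e ≠ 0) := by
            constructor
            · intro e he
              simp only [Finset.mem_filter, Finset.mem_univ, true_and] at he ⊢
              intro h0
              apply he
              have : e ∉ l := fun hel => by have := hlpos e hel; linarith [h0 ▸ this]
              simp [hr'def, hcnt e, this, h0]
            · intro hsub'
              have h1 : em ∈ univ.filter (fun e => r e ≠ 0) := by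
                simp only [Finset.mem_filter, Finset.mem_univ, true_and]
                exact ne_of_gt hmpos
              have h2 := hsub' h1
              simp only [Finset.mem_filter, Finset.mem_univ, true_and] at h2
              apply h2
              simp [hr'def, hcnt em, hem, hm]
          have hcard' : (univ.filter (fun e => r' e ≠ 0)).card ≤ n := by
            have := Finset.card_lt_card hsub
            omega
          have hcons' : ∀ v, v ≠ s → v ≠ t →
              ∑ e ∈ univ.filter (fun e => head e = v), r' e
                = ∑ e ∈ univ.filter (fun e => tail e = v), r' e := by
            intro v hvs hvt
            rw [hsums _ _, hsums _ _]
            have h1 := hnet v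
            rw [if_neg (Ne.symm hvt), if_neg (Ne.symm hvs)] at h1
            have h2 := hcons v hvs hvt
            linear_combination h2 - m * h1
          have hs' : ∑ e ∈ univ.filter (fun e => tail e = s), r' e
              - ∑ e ∈ univ.filter (fun e => head e = s), r' e = F - m := by
            rw [hsums _ _, hsums _ _]
            have h1 := hnet s
            rw [if_neg (Ne.symm hst), if_pos rfl] at h1
            linear_combination hs + m * h1
          have ht' : ∑ e ∈ univ.filter (fun e => head e = t), r' e
              - ∑ e ∈ univ.filter (fun e => tail e = t), r' e = F - m := by
            rw [hsums _ _, hsums _ _]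
            have h1 := hnet t
            rw [if_pos rfl, if_neg hst] at h1
            linear_combination ht - m * h1
          obtain ⟨L', hL'1, hL'2, hL'3⟩ :=
            ih r' (F - m) hcard' hr' hcons' hs' ht' (by linarith)
          refine ⟨(m, l) :: L', ?_, ?_, ?_⟩
          · intro p hp
            rcases List.mem_cons.mp hp with rfl | hp'
            · exact ⟨hmpos, hlne, htr, hnd⟩
            · exact hL'1 p hp'
          · simp only [List.map_cons, List.sum_cons, hL'2]
            ring
          · intro e
            have := hL'3 e
            simp only [hr'def] at this
            simp only [List.map_cons, List.sum_cons]
            linarith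


lemma map_sum_swap {α β : Type*} (L : List α) (s : Finset β) (f : α → β → ℝ) :
    ∑ x ∈ s, (L.map (fun a => f a x)).sum = (L.map (fun a => ∑ x ∈ s, f a x)).sum := by
  induction L with
  | nil => simp
  | cons a L ih => simp [Finset.sum_add_distrib, ih]

lemma list_sum_eq_zero {α : Type*} {L : List α} {f : α → ℝ}
    (h0 : ∀ x ∈ L, 0 ≤ f x) (hs : (L.map f).sum = 0) : ∀ x ∈ L, f x = 0 := by
  induction L with
  | nil => simp
  | cons a L ih =>
      simp only [List.map_cons, List.sum_cons] at hs
      have ha : 0 ≤ f a := h0 a (by simp)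
      have hL : 0 ≤ (L.map f).sum := by
        refine List.sum_nonneg fun x hx => ?_
        obtain ⟨y, hy, rfl⟩ := List.mem_map.mp hx
        exact h0 y (by simp [hy])
      intro x hx
      rcases List.mem_cons.mp hx with rfl | hx'
      · linarith
      · exact ih (fun y hy => h0 y (by simp [hy])) (by linarith) x hx'

lemma map_sub_sum {α : Type*} (L : List α) (f g : α → ℝ) :
    (L.map (fun a => f a - g a)).sum = (L.map f).sum - (L.map g).sum := by
  induction L with
  | nil => simp
  | cons a L ih => simp [ih]; ring

lemma map_sum_le {α : Type*} {L : List α} {f g : α → ℝ}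
    (h : ∀ x ∈ L, f x ≤ g x) : (L.map f).sum ≤ (L.map g).sum := by
  induction L with
  | nil => simp
  | cons a L ih =>
      simp only [List.map_cons, List.sum_cons]
      have := h a (by simp)
      have := ih (fun x hx => h x (by simp [hx]))
      linarith

lemma map_mul_const_sum {α : Type*} (L : List α) (f : α → ℝ) (k : ℝ) :
    (L.map (fun a => f a * k)).sum = (L.map f).sum * k := by
  induction L with
  | nil => simp
  | cons a L ih => simp [ih]; ring

lemma const_mul_list_sum {α : Type*} (L : List α) (f : α → ℝ) (k : ℝ) :
    (L.map (fun a => k * f a)).sum = k * (L.map f).sum := by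
  induction L with
  | nil => simp
  | cons a L ih => simp [ih]; ring

lemma sum_count (S : Finset E) (l : List E) :
    ∑ e ∈ S, ((l.count e : ℕ) : ℝ) = ((l.countP (fun e => decide (e ∈ S)) : ℕ) : ℝ) := by
  induction l with
  | nil => simp
  | cons a l ih =>
      simp only [List.count_cons, List.countP_cons]
      push_cast
      rw [Finset.sum_add_distrib, ih]
      congr 1
      simp only [beq_iff_eq, decide_eq_true_eq]
      rw [Finset.sum_ite_eq S a (fun _ => (1:ℝ))]

end DNFAux

namespace DNFAux

variable {E V : Type*} [Fintype E] [DecidableEq E] [Fintype V] [DecidableEq V]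
variable {tail head : E → V}

lemma trail_unit_flow {s t : V} (hst : s ≠ t) {l : List E}
    (htr : IsTrail tail head s t l) (hnd : l.Nodup) :
    IsUnitFlow tail head s t (fun e => ((l.count e : ℕ) : ℝ)) := by
  have hnet := trail_count htr
  refine ⟨fun e => ⟨by positivity, ?_⟩, fun v hvs hvt => ?_, ?_, ?_⟩
  · show ((l.count e : ℕ) : ℝ) ≤ 1
    exact_mod_cast List.nodup_iff_count_le_one.mp hnd e
  · have h1 := hnet v
    rw [if_neg (Ne.symm hvt), if_neg (Ne.symm hvs)] at h1
    linarith
  · have h1 := hnet s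
    rw [if_neg (Ne.symm hst), if_pos rfl] at h1
    linarith
  · have h1 := hnet t
    rw [if_pos rfl, if_neg hst] at h1
    linarith

end DNFAux

/-- (Tight LP relaxation of the dynamic network flow
formulation with fixed binary predicate values.) On a finite acyclic directed
graph, if every directed `s`–`t` path meets each predicate edge set `S i` in
at most one edge and the feasible set of unit `s`–`t` flows with
`Σ_{e ∈ S i} r e = b i` (binary `b i`) is nonempty, then the linear cost
attains its minimum over this set at a flow with all values in `{0,1}`. -/
theorem dnf_lp_relaxation_tight {E V : Type*}
    [Fintype E] [DecidableEq E] [Fintype V] [DecidableEq V]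
    (tail head : E → V) (s t : V) (hst : s ≠ t)
    (hacyc : GraphAcyclic tail head)
    (c : E → ℝ) (N : ℕ) (S : Fin N → Finset E) (b : Fin N → ℝ)
    (hb : ∀ i, b i = 0 ∨ b i = 1)
    (hpath : ∀ (i : Fin N) (l : List E), l ≠ [] → IsTrail tail head s t l →
      l.countP (fun e => decide (e ∈ S i)) ≤ 1)
    (hne : {r : E → ℝ | IsUnitFlow tail head s t r ∧
      ∀ i, ∑ e ∈ S i, r e = b i}.Nonempty) :
    ∃ r : E → ℝ,
      (IsUnitFlow tail head s t r ∧ ∀ i, ∑ e ∈ S i, r e = b i) ∧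
      (∀ e, r e = 0 ∨ r e = 1) ∧
      (∀ r' : E → ℝ, (IsUnitFlow tail head s t r' ∧ ∀ i, ∑ e ∈ S i, r' e = b i) →
        ∑ e, c e * r e ≤ ∑ e, c e * r' e) := by
  classical
  have key : ∀ r : E → ℝ, (IsUnitFlow tail head s t r ∧ ∀ i, ∑ e ∈ S i, r e = b i) →
      ∃ p : E → ℝ, (IsUnitFlow tail head s t p ∧ ∀ i, ∑ e ∈ S i, p e = b i) ∧
        (∀ e, p e = 0 ∨ p e = 1) ∧ ∑ e, c e * p e ≤ ∑ e, c e * r e := by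
    rintro r ⟨⟨hr01, hcons, hsrc, hsink⟩, hSb⟩
    obtain ⟨L, hL1, hL2, hL3⟩ := DNFAux.decompose hacyc s t hst (Fintype.card E) r 1
      (by simpa using Finset.card_le_univ _) (fun e => (hr01 e).1) hcons hsrc hsink zero_le_one
    have hLne : L ≠ [] := by
      intro h; rw [h] at hL2; simp at hL2
    -- each path of the decomposition satisfies the predicate constraints
    have hfeas : ∀ i : Fin N, ∀ p ∈ L, ∑ e ∈ S i, ((p.2.count e : ℕ) : ℝ) = b i := by
      intro i
      have hbi : b i = (L.map (fun p => p.1 * ∑ e ∈ S i, ((p.2.count e : ℕ) : ℝ))).sum := by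
        rw [← hSb i]
        calc ∑ e ∈ S i, r e
            = ∑ e ∈ S i, (L.map (fun p => p.1 * ((p.2.count e : ℕ) : ℝ))).sum := by
              exact Finset.sum_congr rfl fun e _ => hL3 e
          _ = (L.map (fun p => ∑ e ∈ S i, p.1 * ((p.2.count e : ℕ) : ℝ))).sum :=
              DNFAux.map_sum_swap L (S i) _
          _ = (L.map (fun p => p.1 * ∑ e ∈ S i, ((p.2.count e : ℕ) : ℝ))).sum := by
              simp [Finset.mul_sum]
      have hc01 : ∀ p ∈ L, (∑ e ∈ S i, ((p.2.count e : ℕ) : ℝ)) = 0 ∨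
          (∑ e ∈ S i, ((p.2.count e : ℕ) : ℝ)) = 1 := by
        intro p hp
        obtain ⟨-, hne', htr, -⟩ := hL1 p hp
        have := hpath i p.2 hne' htr
        rw [DNFAux.sum_count]
        interval_cases h : (p.2.countP (fun e => decide (e ∈ S i))) <;> simp [h]
      intro p hp
      obtain ⟨hppos, -, -, -⟩ := hL1 p hp
      rcases hb i with h0 | h1
      · rcases hc01 p hp with hc | hc
        · rw [hc, h0]
        · exfalso
          have hall : ∀ q ∈ L, 0 ≤ q.1 * ∑ e ∈ S i, ((q.2.count e : ℕ) : ℝ) := by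
            intro q hq
            have := (hL1 q hq).1
            have h2 : (0:ℝ) ≤ ∑ e ∈ S i, ((q.2.count e : ℕ) : ℝ) := by positivity
            positivity
          have := DNFAux.list_sum_eq_zero hall (by rw [← hbi, h0]) p hp
          rw [hc] at this
          nlinarith
      · rcases hc01 p hp with hc | hc
        · exfalso
          have hz : (L.map (fun q => q.1 -
              q.1 * ∑ e ∈ S i, ((q.2.count e : ℕ) : ℝ))).sum = 0 := by
            rw [DNFAux.map_sub_sum, hL2, ← hbi, h1]
            ring
          have hall : ∀ q ∈ L, 0 ≤ q.1 - q.1 * ∑ e ∈ S i, ((q.2.count e : ℕ) : ℝ) := by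
            intro q hq
            obtain ⟨hq1, -⟩ := hL1 q hq
            rcases hc01 q hq with h | h <;> rw [h] <;> nlinarith
          have := DNFAux.list_sum_eq_zero hall hz p hp
          rw [hc] at this
          nlinarith
        · rw [hc, h1]
    -- pick the cheapest path of the decomposition
    have hTne : L.toFinset.Nonempty := by
      obtain ⟨a, ha⟩ := List.exists_mem_of_ne_nil L hLne
      exact ⟨a, List.mem_toFinset.mpr ha⟩
    obtain ⟨pm, hpmT, hpmmin⟩ := Finset.exists_min_image L.toFinset
      (fun p => ∑ e, c e * ((p.2.count e : ℕ) : ℝ)) hTne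
    rw [List.mem_toFinset] at hpmT
    set M := ∑ e, c e * ((pm.2.count e : ℕ) : ℝ) with hM
    obtain ⟨hpm1, hpm2, hpm3, hpm4⟩ := hL1 pm hpmT
    refine ⟨fun e => ((pm.2.count e : ℕ) : ℝ),
      ⟨DNFAux.trail_unit_flow hst hpm3 hpm4, fun i => hfeas i pm hpmT⟩, ?_, ?_⟩
    · intro e
      have := List.nodup_iff_count_le_one.mp hpm4 e
      interval_cases h : pm.2.count e <;> simp [h]
    · -- cost comparison
      have hcost : ∑ e, c e * r e
          = (L.map (fun p => p.1 * ∑ e, c e * ((p.2.count e : ℕ) : ℝ))).sum := by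
        calc ∑ e, c e * r e
            = ∑ e, (L.map (fun p => c e * (p.1 * ((p.2.count e : ℕ) : ℝ)))).sum := by
              refine Finset.sum_congr rfl fun e _ => ?_
              rw [hL3 e, ← DNFAux.const_mul_list_sum]
          _ = (L.map (fun p => ∑ e, c e * (p.1 * ((p.2.count e : ℕ) : ℝ)))).sum :=
              DNFAux.map_sum_swap L univ _
          _ = (L.map (fun p => p.1 * ∑ e, c e * ((p.2.count e : ℕ) : ℝ))).sum := by
              refine congrArg _ (List.map_congr_left fun p _ => ?_)
              rw [Finset.mul_sum]
              exact Finset.sum_congr rfl fun e _ => by ring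
      rw [hcost]
      have h1 : (L.map (fun p => p.1 * M)).sum ≤
          (L.map (fun p => p.1 * ∑ e, c e * ((p.2.count e : ℕ) : ℝ))).sum := by
        refine DNFAux.map_sum_le fun p hp => ?_
        have h2 := hpmmin p (List.mem_toFinset.mpr hp)
        have h3 := (hL1 p hp).1
        nlinarith
      have h4 : (L.map (fun p => p.1 * M)).sum = M := by
        rw [DNFAux.map_mul_const_sum, hL2, one_mul]
      linarith
  obtain ⟨r0, hr0⟩ := hne
  obtain ⟨p0, hp0f, hp001, hp0c⟩ := key r0 hr0
  set T : Finset (E → ℝ) := ((Finset.univ : Finset (E → Bool)).image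
      (fun f e => if f e then (1:ℝ) else 0)).filter
      (fun p => IsUnitFlow tail head s t p ∧ ∀ i, ∑ e ∈ S i, p e = b i) with hT
  have hmemT : ∀ p : E → ℝ, (∀ e, p e = 0 ∨ p e = 1) →
      (IsUnitFlow tail head s t p ∧ ∀ i, ∑ e ∈ S i, p e = b i) → p ∈ T := by
    intro p h01 hf
    refine Finset.mem_filter.mpr ⟨?_, hf⟩
    refine Finset.mem_image.mpr ⟨fun e => if p e = 1 then true else false,
      Finset.mem_univ _, ?_⟩
    funext e
    rcases h01 e with h | h <;> simp [h]
  obtain ⟨pm, hpmT, hpmmin⟩ := Finset.exists_min_image T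
    (fun p => ∑ e, c e * p e) ⟨p0, hmemT p0 hp001 hp0f⟩
  obtain ⟨hpmI, hpmF⟩ := Finset.mem_filter.mp hpmT
  obtain ⟨f, -, hfp⟩ := Finset.mem_image.mp hpmI
  refine ⟨pm, hpmF, ?_, ?_⟩
  · intro e
    rw [← hfp]
    by_cases h : f e <;> simp [h]
  · intro r' hr'
    obtain ⟨q, hqf, hq01, hqc⟩ := key r' hr'
    exact le_trans (hpmmin q (hmemT q hq01 hqf)) hqc
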